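/- The number of 01-words of length n in which no initial segment contains more 0's than 1's equals the central binomial coefficient C(n, ⌊n/2⌋). -/

import Mathlib

open Finset

def myF (n h : ℕ) : ℕ := ∑ k ∈ Finset.range (h + 1), n.choose ((n - h) / 2 + k)

lemma myF_of_le {n h : ℕ} (hnh : n ≤ h) : myF n h = 2 ^ n := by
  have hs : (n - h) / 2 = 0 := by omega
  rw [myF, hs]
  simp only [zero_add]
  rw [← Nat.sum_range_choose n]
  refine (Finset.sum_subset ?_ ?_).symm
  · intro x hx; simp_all; omega
  · intro x hx hx'; simp_all; exact Nat.choose_eq_zero_of_lt (by omega)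

lemma myF_zero (h : ℕ) : myF 0 h = 1 := by simpa using myF_of_le (Nat.zero_le h)

lemma myF_succ_zero (n : ℕ) : myF (n + 1) 0 = myF n 1 := by
  rcases Nat.eq_zero_or_pos n with rfl | hn
  · simp [myF]; decide
  · have h1 : (n + 1) / 2 = (n - 1) / 2 + 1 := by omega
    rw [myF, myF, Finset.sum_range_succ, Finset.sum_range_succ]
    simp only [Finset.sum_range_zero, Finset.sum_range_one, Nat.sub_zero, Nat.add_zero, Nat.zero_add]
    rw [h1]
    exact Nat.choose_succ_succ n ((n-1)/2)

lemma myF_succ_succ (n h : ℕ) : myF (n + 1) (h + 1) = myF n (h + 2) + myF n h := by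
  rcases le_or_gt n h with hle | hlt
  · rw [myF_of_le (by omega), myF_of_le (by omega), myF_of_le hle]; ring
  rcases eq_or_lt_of_le (Nat.succ_le_of_lt hlt) with heq | hlt2
  · -- n = h + 1
    subst heq
    have e1 : myF (h + 2) (h + 1) = ∑ k ∈ Finset.range (h + 2), (h + 2).choose k := by
      rw [myF]
      have : (h + 2 - (h + 1)) / 2 = 0 := by omega
      simp [this]
    have e2 : myF (h + 1) (h + 2) = 2 ^ (h + 1) := myF_of_le (by omega)
    have e3 : myF (h + 1) h = ∑ k ∈ Finset.range (h + 1), (h + 1).choose k := by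
      rw [myF]
      have : (h + 1 - h) / 2 = 0 := by omega
      simp [this]
    have f1 : ∑ k ∈ Finset.range (h + 2), (h + 2).choose k + (h+2).choose (h+2) = 2 ^ (h + 2) := by
      rw [← Finset.sum_range_succ, Nat.sum_range_choose]
    have f2 : ∑ k ∈ Finset.range (h + 1), (h + 1).choose k + (h+1).choose (h+1) = 2 ^ (h + 1) := by
      rw [← Finset.sum_range_succ, Nat.sum_range_choose]
    rw [e1, e2, e3]
    simp [Nat.choose_self] at f1 f2
    have : 2 ^ (h+2) = 2 ^ (h+1) + 2 ^ (h+1) := by ring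
    omega
  · -- n ≥ h + 2
    have ha : (n - h) / 2 ≥ 1 := by omega
    set a' : ℕ := (n - h) / 2 - 1 with ha'
    have h1 : (n + 1 - (h + 1)) / 2 = a' + 1 := by omega
    have h2 : (n - (h + 2)) / 2 = a' := by omega
    have h3 : (n - h) / 2 = a' + 1 := by omega
    rw [myF, myF, myF, h1, h2, h3]
    have pasc : ∀ k, (n + 1).choose (a' + 1 + k) = n.choose (a' + k) + n.choose (a' + 1 + k) := by
      intro k
      have : a' + 1 + k = (a' + k) + 1 := by ring
      rw [this, Nat.choose_succ_succ n (a' + k)]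
    rw [Finset.sum_congr rfl (fun k _ => pasc k), Finset.sum_add_distrib]
    have e4 : ∑ k ∈ Finset.range (h + 3), n.choose (a' + k)
        = ∑ k ∈ Finset.range (h + 2), n.choose (a' + k) + n.choose (a' + (h + 2)) := by
      rw [Finset.sum_range_succ]
    have e5 : ∑ k ∈ Finset.range (h + 2), n.choose (a' + 1 + k)
        = ∑ k ∈ Finset.range (h + 1), n.choose (a' + 1 + k) + n.choose (a' + 1 + (h + 1)) := by
      rw [Finset.sum_range_succ]
    have e6 : a' + 1 + (h + 1) = a' + (h + 2) := by ring
    rw [e5, e6, e4]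
    ring

def cnt {n : ℕ} (w : Fin n → Fin 2) (m : ℕ) (b : Fin 2) : ℕ :=
  (Finset.univ.filter (fun i : Fin n => i.val < m ∧ w i = b)).card

def myG (n h : ℕ) : ℕ :=
  (Finset.univ.filter (fun w : Fin n → Fin 2 =>
    ∀ m ≤ n, cnt w m 0 ≤ cnt w m 1 + h)).card

lemma cnt_zero {n : ℕ} (w : Fin n → Fin 2) (b : Fin 2) : cnt w 0 b = 0 := by simp [cnt]

lemma cnt_cons {n : ℕ} (a : Fin 2) (v : Fin n → Fin 2) (m : ℕ) (b : Fin 2) :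
    cnt (Fin.cons a v) (m + 1) b = (if a = b then 1 else 0) + cnt v m b := by
  rw [cnt, cnt, Finset.card_filter, Finset.card_filter, Fin.sum_univ_succ]
  simp [Nat.succ_lt_succ_iff]

lemma pred_cons {n h : ℕ} (a : Fin 2) (v : Fin n → Fin 2) :
    (∀ m ≤ n + 1, cnt (Fin.cons a v) m 0 ≤ cnt (Fin.cons a v) m 1 + h) ↔
    (∀ m ≤ n, (if a = 0 then 1 else 0) + cnt v m 0
        ≤ (if a = 1 then 1 else 0) + cnt v m 1 + h) := by
  constructor
  · intro H m hm
    have := H (m + 1) (by omega)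
    rw [cnt_cons, cnt_cons] at this
    omega
  · intro H m hm
    match m with
    | 0 => simp [cnt_zero]
    | (m + 1) =>
      rw [cnt_cons, cnt_cons]
      have := H m (by omega)
      omega

lemma myG_zero (h : ℕ) : myG 0 h = 1 := by
  rw [myG]
  rw [Finset.filter_true_of_mem (fun w _ => ?_)]
  · simp
  · intro m hm
    interval_cases m
    simp [cnt_zero]

lemma myG_succ_aux (n h : ℕ) :
    myG (n + 1) h
      = (∑ v : Fin n → Fin 2, if (∀ m ≤ n, 1 + cnt v m 0 ≤ cnt v m 1 + h) then 1 else 0)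
      + (∑ v : Fin n → Fin 2, if (∀ m ≤ n, cnt v m 0 ≤ 1 + cnt v m 1 + h) then 1 else 0) := by
  rw [myG, Finset.card_filter]
  rw [← Equiv.sum_comp (Fin.consEquiv (fun _ : Fin (n + 1) => Fin 2))
    (fun w => if (∀ m ≤ n + 1, cnt w m 0 ≤ cnt w m 1 + h) then 1 else 0)]
  rw [Fintype.sum_prod_type, Fin.sum_univ_two]
  congr 1
  · refine Finset.sum_congr rfl fun v _ => ?_
    refine if_congr ?_ rfl rfl
    rw [show (Fin.consEquiv (fun _ : Fin (n+1) => Fin 2)) ((0 : Fin 2), v) = Fin.cons 0 v from rfl]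
    rw [pred_cons]
    simp only [if_pos rfl, if_neg (by decide : ¬ (0 : Fin 2) = 1)]
    exact forall₂_congr fun m _ => by simp only [if_true]; omega
  · refine Finset.sum_congr rfl fun v _ => ?_
    refine if_congr ?_ rfl rfl
    rw [show (Fin.consEquiv (fun _ : Fin (n+1) => Fin 2)) ((1 : Fin 2), v) = Fin.cons 1 v from rfl]
    rw [pred_cons]
    simp only [if_pos rfl, if_neg (by decide : ¬ (1 : Fin 2) = 0)]
    exact forall₂_congr fun m _ => by simp only [if_true]; omega

lemma myG_succ_zero (n : ℕ) : myG (n + 1) 0 = myG n 1 := by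
  rw [myG_succ_aux]
  have h1 : (∑ v : Fin n → Fin 2,
      if (∀ m ≤ n, 1 + cnt v m 0 ≤ cnt v m 1 + 0) then 1 else 0) = 0 := by
    refine Finset.sum_eq_zero fun v _ => ?_
    rw [if_neg]
    intro H
    have := H 0 (by omega)
    simp [cnt_zero] at this
  rw [h1, Nat.zero_add, myG, Finset.card_filter]
  refine Finset.sum_congr rfl fun v _ => ?_
  exact if_congr (forall₂_congr fun m _ => by omega) rfl rfl

lemma myG_succ_succ (n h : ℕ) : myG (n + 1) (h + 1) = myG n (h + 2) + myG n h := by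
  rw [myG_succ_aux, Nat.add_comm]
  congr 1
  · rw [myG, Finset.card_filter]
    refine Finset.sum_congr rfl fun v _ => ?_
    exact if_congr (forall₂_congr fun m _ => by omega) rfl rfl
  · rw [myG, Finset.card_filter]
    refine Finset.sum_congr rfl fun v _ => ?_
    exact if_congr (forall₂_congr fun m _ => by omega) rfl rfl

lemma myG_eq_myF (n h : ℕ) : myG n h = myF n h := by
  induction n generalizing h with
  | zero => rw [myG_zero, myF_zero]
  | succ n ih =>
    match h with
    | 0 => rw [myG_succ_zero, myF_succ_zero, ih]
    | (h + 1) => rw [myG_succ_succ, myF_succ_succ, ih, ih]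

theorem stmt2 (n : ℕ) :
    (Finset.univ.filter (fun w : Fin n → Fin 2 =>
        ∀ m ≤ n, ((Finset.univ.filter (fun i : Fin n => i.val < m ∧ w i = 0)).card ≤
          (Finset.univ.filter (fun i : Fin n => i.val < m ∧ w i = 1)).card))).card =
      n.choose (n / 2) := by
  have h : myG n 0 = n.choose (n / 2) := by
    rw [myG_eq_myF, myF]
    simp
  rw [← h, myG]
  congr 1
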